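/- Let G be a finite group and suppose G = G₁ · G₂ for subgroups G₁, G₂ (every element of G is a product of an element of G₁ and an element of G₂). Let (ρ, V) and (σ, W) be finite-dimensional complex representations of G such that ρ restricted to G₂ is trivial and σ restricted to G₂ is irreducible. Then the map Φ ↦ Φ ⊗ id_W defines an isomorphism from End_{G₁}(ρ|_{G₁}) to End_G(ρ ⊗ σ). In particular, if ρ|_{G₁} is irreducible, then ρ ⊗ σ is an irreducible representation of G. -/

import Mathlib

open scoped TensorProduct

namespace Stmt8Aux

variable {V W : Type*} [AddCommGroup V] [Module ℂ V] [AddCommGroup W] [Module ℂ W]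

lemma tmul_left_cancel (v : V) (w : W) (hw : w ≠ 0) (h : v ⊗ₜ[ℂ] w = 0) : v = 0 := by
  obtain ⟨ψ, hψ⟩ : ∃ ψ : Module.Dual ℂ W, ψ w ≠ 0 := by
    by_contra hc
    push_neg at hc
    exact hw ((Module.forall_dual_apply_eq_zero_iff ℂ w).mp hc)
  have h2 := congrArg (fun z => (TensorProduct.rid ℂ V) (TensorProduct.map LinearMap.id ψ z)) h
  simp only [map_zero, TensorProduct.map_tmul, LinearMap.id_coe, id_eq,
    TensorProduct.rid_tmul] at h2
  rcases smul_eq_zero.mp h2 with h3 | h3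
  · exact absurd h3 hψ
  · exact h3

end Stmt8Aux

namespace Stmt8Aux

variable {V W : Type*} [AddCommGroup V] [Module ℂ V] [AddCommGroup W] [Module ℂ W]

lemma lid_map_comp' (φ : V →ₗ[ℂ] ℂ) (B : W →ₗ[ℂ] W) :
    (TensorProduct.lid ℂ W).toLinearMap ∘ₗ TensorProduct.map φ LinearMap.id ∘ₗ
      TensorProduct.map LinearMap.id B
      = B ∘ₗ (TensorProduct.lid ℂ W).toLinearMap ∘ₗ TensorProduct.map φ LinearMap.id := by
  apply TensorProduct.ext'
  intro x y
  simp [TensorProduct.map_tmul, TensorProduct.lid_tmul, map_smul]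

lemma swap_lemma' (φ : V →ₗ[ℂ] ℂ) (ψ : W →ₗ[ℂ] ℂ) :
    φ ∘ₗ (TensorProduct.rid ℂ V).toLinearMap ∘ₗ TensorProduct.map LinearMap.id ψ
      = ψ ∘ₗ (TensorProduct.lid ℂ W).toLinearMap ∘ₗ TensorProduct.map φ LinearMap.id := by
  apply TensorProduct.ext'
  intro x y
  simp [TensorProduct.map_tmul, TensorProduct.lid_tmul, TensorProduct.rid_tmul, map_smul,
    mul_comm]

lemma sep' [FiniteDimensional ℂ V] [FiniteDimensional ℂ W] (x : V ⊗[ℂ] W)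
    (h : ∀ φ : V →ₗ[ℂ] ℂ, TensorProduct.lid ℂ W (TensorProduct.map φ LinearMap.id x) = 0) :
    x = 0 := by
  let b := Module.Basis.ofVectorSpace ℂ V
  let c := Module.Basis.ofVectorSpace ℂ W
  have hrepr : (b.tensorProduct c).repr x = 0 := by
    ext ⟨i, j⟩
    have hmaps : (Finsupp.lapply (i, j) : (_ →₀ ℂ) →ₗ[ℂ] ℂ) ∘ₗ
          ((b.tensorProduct c).repr : (V ⊗[ℂ] W) ≃ₗ[ℂ] _).toLinearMap
        = c.coord j ∘ₗ (TensorProduct.lid ℂ W).toLinearMap ∘ₗ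
            TensorProduct.map (b.coord i) LinearMap.id := by
      apply TensorProduct.ext'
      intro v w
      simp [Module.Basis.tensorProduct_repr_tmul_apply, Module.Basis.coord_apply, TensorProduct.lid_tmul,
        mul_comm]
    have := LinearMap.congr_fun hmaps x
    simp only [LinearMap.comp_apply, LinearEquiv.coe_coe, Finsupp.lapply_apply] at this
    rw [this, h, map_zero]
    rfl
  exact (b.tensorProduct c).repr.map_eq_zero_iff.mp hrepr

lemma schur' {G : Type*} [Group G] (G₂ : Subgroup G) [FiniteDimensional ℂ W] [Nontrivial W]
    (σ : Representation ℂ G W)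
    (hσirr : ∀ q : Submodule ℂ W, (∀ g ∈ G₂, q.map (σ g) ≤ q) → q = ⊥ ∨ q = ⊤)
    (T : W →ₗ[ℂ] W) (hT : ∀ g ∈ G₂, T ∘ₗ σ g = σ g ∘ₗ T) :
    ∃ c : ℂ, T = c • LinearMap.id := by
  obtain ⟨c, hc⟩ := Module.End.exists_eigenvalue (T : Module.End ℂ W)
  refine ⟨c, ?_⟩
  have hinv : ∀ g ∈ G₂, (Module.End.eigenspace (T : Module.End ℂ W) c).map (σ g)
      ≤ Module.End.eigenspace (T : Module.End ℂ W) c := by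
    intro g hg w hw
    simp only [Submodule.mem_map] at hw
    obtain ⟨w', hw', rfl⟩ := hw
    rw [Module.End.mem_eigenspace_iff] at hw' ⊢
    have h1 := LinearMap.congr_fun (hT g hg) w'
    simp only [LinearMap.comp_apply] at h1
    rw [h1, hw', map_smul]
  have hq : Module.End.eigenspace (T : Module.End ℂ W) c = ⊤ := by
    rcases hσirr _ hinv with h | h
    · exact absurd h hc
    · exact h
  ext w
  have hwmem : w ∈ Module.End.eigenspace (T : Module.End ℂ W) c := hq ▸ Submodule.mem_top
  rw [Module.End.mem_eigenspace_iff] at hwmem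
  simpa using hwmem

lemma part3core {G : Type*} [Group G] (G₂ : Subgroup G)
    [FiniteDimensional ℂ V] [FiniteDimensional ℂ W] [Nontrivial W]
    (σ : Representation ℂ G W)
    (hσirr : ∀ q : Submodule ℂ W, (∀ g ∈ G₂, q.map (σ g) ≤ q) → q = ⊥ ∨ q = ⊤)
    (F : (V ⊗[ℂ] W) →ₗ[ℂ] (V ⊗[ℂ] W))
    (hF : ∀ g ∈ G₂, F ∘ₗ TensorProduct.map LinearMap.id (σ g)
        = TensorProduct.map LinearMap.id (σ g) ∘ₗ F) :
    ∃ f : V →ₗ[ℂ] V, F = TensorProduct.map f LinearMap.id := by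
  classical
  let c := Module.Basis.ofVectorSpace ℂ W
  obtain ⟨i₀⟩ := c.index_nonempty
  set w₀ := c i₀ with hw₀def
  set ψ := c.coord i₀ with hψdef
  have hψ : ψ w₀ = 1 := by simp [hψdef, hw₀def, Module.Basis.coord_apply]
  let T : (V →ₗ[ℂ] ℂ) → V → (W →ₗ[ℂ] W) := fun φ v =>
    (TensorProduct.lid ℂ W).toLinearMap ∘ₗ TensorProduct.map φ LinearMap.id ∘ₗ F ∘ₗ
      TensorProduct.mk ℂ V W v
  have hTval : ∀ φ v w, T φ v w = TensorProduct.lid ℂ W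
      (TensorProduct.map φ LinearMap.id (F (v ⊗ₜ[ℂ] w))) := fun _ _ _ => rfl
  have hTcomm : ∀ φ v, ∀ g ∈ G₂, (T φ v) ∘ₗ σ g = σ g ∘ₗ (T φ v) := by
    intro φ v g hg
    ext w
    simp only [LinearMap.comp_apply]
    rw [hTval, hTval]
    have h1 : F (v ⊗ₜ[ℂ] σ g w)
        = TensorProduct.map LinearMap.id (σ g) (F (v ⊗ₜ[ℂ] w)) := by
      have := LinearMap.congr_fun (hF g hg) (v ⊗ₜ[ℂ] w)
      simpa [TensorProduct.map_tmul] using this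
    rw [h1]
    have := LinearMap.congr_fun (lid_map_comp' φ (σ g)) (F (v ⊗ₜ[ℂ] w))
    simpa [LinearMap.comp_apply] using this
  have hTscalar : ∀ φ v, ∃ cst : ℂ, T φ v = cst • LinearMap.id := fun φ v =>
    schur' G₂ σ hσirr (T φ v) (hTcomm φ v)
  choose cst hcst using hTscalar
  let f : V →ₗ[ℂ] V := (TensorProduct.rid ℂ V).toLinearMap ∘ₗ
    TensorProduct.map LinearMap.id ψ ∘ₗ F ∘ₗ (TensorProduct.mk ℂ V W).flip w₀
  have hkey : ∀ (φ : V →ₗ[ℂ] ℂ) v, φ (f v) = cst φ v := by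
    intro φ v
    have h1 : φ (f v) = ψ (T φ v w₀) := by
      have := LinearMap.congr_fun (swap_lemma' φ ψ) (F (v ⊗ₜ[ℂ] w₀))
      simpa [f, hTval, LinearMap.comp_apply] using this
    rw [h1, hcst]
    simp [hψ]
  refine ⟨f, ?_⟩
  apply TensorProduct.ext'
  intro v w
  have hsep : ∀ φ : V →ₗ[ℂ] ℂ, TensorProduct.lid ℂ W
      (TensorProduct.map φ LinearMap.id
        (F (v ⊗ₜ[ℂ] w) - TensorProduct.map f LinearMap.id (v ⊗ₜ[ℂ] w))) = 0 := by
    intro φ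
    rw [map_sub, map_sub]
    have hL : TensorProduct.lid ℂ W (TensorProduct.map φ LinearMap.id (F (v ⊗ₜ[ℂ] w)))
        = cst φ v • w := by
      rw [← hTval, hcst]; simp
    have hR : TensorProduct.lid ℂ W (TensorProduct.map φ LinearMap.id
        (TensorProduct.map f LinearMap.id (v ⊗ₜ[ℂ] w))) = cst φ v • w := by
      simp [TensorProduct.map_tmul, TensorProduct.lid_tmul, hkey]
    rw [hL, hR, sub_self]
  exact sub_eq_zero.mp (sep' _ hsep)

end Stmt8Aux

/-- Let `G` be a finite group with `G = G₁ · G₂`, and `(ρ, V)`, `(σ, W)`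
finite-dimensional complex representations of `G` such that `ρ|_{G₂}` is trivial and `σ|_{G₂}`
is irreducible.  Then `Φ ↦ Φ ⊗ id_W` is an isomorphism `End_{G₁}(ρ|_{G₁}) ≃ End_G(ρ ⊗ σ)`;
in particular, if `ρ|_{G₁}` is irreducible, then `ρ ⊗ σ` is irreducible. -/
theorem stmt_8 {G : Type*} [Group G] [Fintype G] (G₁ G₂ : Subgroup G)
    (hprod : ∀ g : G, ∃ g₁ ∈ G₁, ∃ g₂ ∈ G₂, g = g₁ * g₂)
    {V W : Type*} [AddCommGroup V] [Module ℂ V] [FiniteDimensional ℂ V]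
    [AddCommGroup W] [Module ℂ W] [FiniteDimensional ℂ W] [Nontrivial W]
    (ρ : Representation ℂ G V) (σ : Representation ℂ G W)
    (hρtriv : ∀ g ∈ G₂, ρ g = LinearMap.id)
    (hσirr : ∀ q : Submodule ℂ W, (∀ g ∈ G₂, q.map (σ g) ≤ q) → q = ⊥ ∨ q = ⊤) :
    (∀ f : V →ₗ[ℂ] V, (∀ g ∈ G₁, f ∘ₗ ρ g = ρ g ∘ₗ f) → ∀ g : G,
        TensorProduct.map f LinearMap.id ∘ₗ TensorProduct.map (ρ g) (σ g)
          = TensorProduct.map (ρ g) (σ g) ∘ₗ TensorProduct.map f LinearMap.id) ∧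
    (Function.Injective
        fun f : V →ₗ[ℂ] V => TensorProduct.map f (LinearMap.id : W →ₗ[ℂ] W)) ∧
    (∀ F : (V ⊗[ℂ] W) →ₗ[ℂ] (V ⊗[ℂ] W),
        (∀ g : G, F ∘ₗ TensorProduct.map (ρ g) (σ g)
            = TensorProduct.map (ρ g) (σ g) ∘ₗ F) →
        ∃ f : V →ₗ[ℂ] V, (∀ g ∈ G₁, f ∘ₗ ρ g = ρ g ∘ₗ f) ∧
          F = TensorProduct.map f LinearMap.id) ∧
    ((∀ q : Submodule ℂ V, (∀ g ∈ G₁, q.map (ρ g) ≤ q) → q = ⊥ ∨ q = ⊤) →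
      ∀ q : Submodule ℂ (V ⊗[ℂ] W),
        (∀ g : G, q.map (TensorProduct.map (ρ g) (σ g)) ≤ q) → q = ⊥ ∨ q = ⊤) := by
  classical
  -- every f commuting with ρ on G₁ commutes with ρ on all of G
  have hrhoall : ∀ (f : V →ₗ[ℂ] V), (∀ g ∈ G₁, f ∘ₗ ρ g = ρ g ∘ₗ f) →
      ∀ g : G, f ∘ₗ ρ g = ρ g ∘ₗ f := by
    intro f hf g
    obtain ⟨g₁, h1, g₂, h2, rfl⟩ := hprod g
    have hρeq : ρ (g₁ * g₂) = ρ g₁ := by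
      rw [map_mul, hρtriv g₂ h2]
      ext v
      simp [Module.End.mul_apply]
    rw [hρeq]
    exact hf g₁ h1
  -- Part 1
  have part1 : ∀ f : V →ₗ[ℂ] V, (∀ g ∈ G₁, f ∘ₗ ρ g = ρ g ∘ₗ f) → ∀ g : G,
      TensorProduct.map f LinearMap.id ∘ₗ TensorProduct.map (ρ g) (σ g)
        = TensorProduct.map (ρ g) (σ g) ∘ₗ TensorProduct.map f LinearMap.id := by
    intro f hf g
    have hco := hrhoall f hf g
    apply TensorProduct.ext'
    intro v w
    have h1 : f (ρ g v) = ρ g (f v) := by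
      have := LinearMap.congr_fun hco v
      simpa [LinearMap.comp_apply] using this
    simp only [LinearMap.comp_apply, TensorProduct.map_tmul, LinearMap.id_coe, id_eq, h1]
  -- Part 2
  have part2 : Function.Injective
      (fun f : V →ₗ[ℂ] V => TensorProduct.map f (LinearMap.id : W →ₗ[ℂ] W)) := by
    intro f f' h
    obtain ⟨w₀, hw₀⟩ := exists_ne (0 : W)
    ext v
    have h1 := LinearMap.congr_fun h (v ⊗ₜ[ℂ] w₀)
    simp only [TensorProduct.map_tmul, LinearMap.id_coe, id_eq] at h1
    have h2 : (f v - f' v) ⊗ₜ[ℂ] w₀ = 0 := by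
      rw [TensorProduct.sub_tmul, h1, sub_self]
    exact sub_eq_zero.mp (Stmt8Aux.tmul_left_cancel _ _ hw₀ h2)
  -- Part 3
  have part3 : ∀ F : (V ⊗[ℂ] W) →ₗ[ℂ] (V ⊗[ℂ] W),
      (∀ g : G, F ∘ₗ TensorProduct.map (ρ g) (σ g)
          = TensorProduct.map (ρ g) (σ g) ∘ₗ F) →
      ∃ f : V →ₗ[ℂ] V, (∀ g ∈ G₁, f ∘ₗ ρ g = ρ g ∘ₗ f) ∧
        F = TensorProduct.map f LinearMap.id := by
    intro F hFc
    have hF2 : ∀ g ∈ G₂, F ∘ₗ TensorProduct.map LinearMap.id (σ g)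
        = TensorProduct.map LinearMap.id (σ g) ∘ₗ F := by
      intro g hg
      have := hFc g
      rwa [hρtriv g hg] at this
    obtain ⟨f, hfF⟩ := Stmt8Aux.part3core G₂ σ hσirr F hF2
    refine ⟨f, ?_, hfF⟩
    intro g hg
    obtain ⟨w₀, hw₀⟩ := exists_ne (0 : W)
    have hσw : σ g w₀ ≠ 0 := by
      intro hcon
      apply hw₀
      have hz : (σ g⁻¹ * σ g) w₀ = 0 := by rw [Module.End.mul_apply, hcon, map_zero]
      rwa [← map_mul, inv_mul_cancel, map_one, Module.End.one_apply] at hz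
    ext v
    simp only [LinearMap.comp_apply]
    have h1 := LinearMap.congr_fun (hFc g) (v ⊗ₜ[ℂ] w₀)
    rw [hfF] at h1
    simp only [LinearMap.comp_apply, TensorProduct.map_tmul, LinearMap.id_coe, id_eq] at h1
    have h2 : (f (ρ g v) - ρ g (f v)) ⊗ₜ[ℂ] (σ g w₀) = 0 := by
      rw [TensorProduct.sub_tmul, h1, sub_self]
    exact sub_eq_zero.mp (Stmt8Aux.tmul_left_cancel _ _ hσw h2)
  refine ⟨part1, part2, part3, ?_⟩
  -- Part 4
  intro hVirr q hq
  set τ : Representation ℂ G (V ⊗[ℂ] W) := ρ.tprod σ with hτdef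
  have hτapp : ∀ g, τ g = TensorProduct.map (ρ g) (σ g) := fun g =>
    Representation.tprod_apply ρ σ g
  have hτinv : ∀ a : G, τ a⁻¹ * τ a = 1 := fun a => by
    rw [← map_mul, inv_mul_cancel, map_one]
  have hτinv' : ∀ a : G, τ a * τ a⁻¹ = 1 := fun a => by
    rw [← map_mul, mul_inv_cancel, map_one]
  have hqτ : ∀ (g : G) (x : V ⊗[ℂ] W), x ∈ q → τ g x ∈ q := by
    intro g x hx
    have := hq g (Submodule.mem_map_of_mem (f := TensorProduct.map (ρ g) (σ g)) hx)
    rwa [hτapp]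
  obtain ⟨p, hp⟩ := q.exists_isCompl
  set π : (V ⊗[ℂ] W) →ₗ[ℂ] (V ⊗[ℂ] W) := q.subtype ∘ₗ (q.linearProjOfIsCompl p hp) with hπdef
  have hπmem : ∀ x, π x ∈ q := fun x => (q.linearProjOfIsCompl p hp x).2
  have hπfix : ∀ x ∈ q, π x = x := by
    intro x hx
    have := Submodule.linearProjOfIsCompl_apply_left hp ⟨x, hx⟩
    simp only [hπdef, LinearMap.comp_apply, Submodule.subtype_apply]
    exact congrArg Subtype.val this
  set n := Fintype.card G with hndef
  have hn : (n : ℂ) ≠ 0 := by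
    have : 0 < n := Fintype.card_pos
    exact_mod_cast this.ne'
  set P : (V ⊗[ℂ] W) →ₗ[ℂ] (V ⊗[ℂ] W) :=
    (n : ℂ)⁻¹ • ∑ g : G, (τ g * π * τ g⁻¹) with hPdef
  have hPmem : ∀ x, P x ∈ q := by
    intro x
    rw [hPdef]
    simp only [LinearMap.smul_apply, LinearMap.sum_apply]
    refine Submodule.smul_mem _ _ (Submodule.sum_mem _ fun g _ => ?_)
    simp only [Module.End.mul_apply]
    exact hqτ g _ (hπmem _)
  have hPfix : ∀ x ∈ q, P x = x := by
    intro x hx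
    rw [hPdef]
    simp only [LinearMap.smul_apply, LinearMap.sum_apply]
    have hterm : ∀ g : G, (τ g * π * τ g⁻¹) x = x := by
      intro g
      simp only [Module.End.mul_apply]
      rw [hπfix _ (hqτ g⁻¹ x hx)]
      have := LinearMap.congr_fun (hτinv' g) x
      simpa [Module.End.mul_apply] using this
    rw [Finset.sum_congr rfl (fun g _ => hterm g), Finset.sum_const, Finset.card_univ,
      ← hndef]
    rw [← Nat.cast_smul_eq_nsmul ℂ, smul_smul, inv_mul_cancel₀ hn, one_smul]
  have hPcomm : ∀ h : G, P * τ h = τ h * P := by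
    intro h
    rw [hPdef, smul_mul_assoc, mul_smul_comm, Finset.sum_mul, Finset.mul_sum]
    congr 1
    refine (Fintype.sum_equiv (Equiv.mulLeft h)
      (fun g => τ h * (τ g * π * τ g⁻¹)) (fun g => τ g * π * τ g⁻¹ * τ h) ?_).symm
    intro x
    show τ h * (τ x * π * τ x⁻¹) = τ (h * x) * π * τ (h * x)⁻¹ * τ h
    rw [mul_inv_rev, map_mul, map_mul]
    simp only [mul_assoc, hτinv, mul_one]
  have hPcommₗ : ∀ g : G, P ∘ₗ TensorProduct.map (ρ g) (σ g)
      = TensorProduct.map (ρ g) (σ g) ∘ₗ P := by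
    intro g
    have := hPcomm g
    rwa [hτapp, Module.End.mul_eq_comp, Module.End.mul_eq_comp] at this
  obtain ⟨f, hfcomm, hfP⟩ := part3 P hPcommₗ
  have hPP : P ∘ₗ P = P := by
    apply LinearMap.ext
    intro x
    simp only [LinearMap.comp_apply]
    exact hPfix _ (hPmem x)
  have hff : f ∘ₗ f = f := by
    apply part2
    have h1 : TensorProduct.map (f ∘ₗ f) (LinearMap.id : W →ₗ[ℂ] W)
        = TensorProduct.map f LinearMap.id ∘ₗ TensorProduct.map f LinearMap.id := by
      rw [← TensorProduct.map_comp, LinearMap.id_comp]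
    show TensorProduct.map (f ∘ₗ f) (LinearMap.id : W →ₗ[ℂ] W)
        = TensorProduct.map f LinearMap.id
    rw [h1, ← hfP, hPP, hfP]
  have hrng : ∀ g ∈ G₁, (LinearMap.range f).map (ρ g) ≤ LinearMap.range f := by
    intro g hg x hx
    simp only [Submodule.mem_map, LinearMap.mem_range] at hx
    obtain ⟨y, ⟨z, rfl⟩, rfl⟩ := hx
    refine ⟨ρ g z, ?_⟩
    have := LinearMap.congr_fun (hfcomm g hg) z
    simpa [LinearMap.comp_apply] using this
  rcases hVirr (LinearMap.range f) hrng with hbot | htop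
  · left
    have hf0 : f = 0 := LinearMap.range_eq_bot.mp hbot
    have hP0 : P = 0 := by
      rw [hfP, hf0]
      apply TensorProduct.ext'
      intro v w
      simp [TensorProduct.zero_tmul]
    rw [Submodule.eq_bot_iff]
    intro x hx
    rw [← hPfix x hx, hP0]
    rfl
  · right
    have hfsurj : Function.Surjective f := LinearMap.range_eq_top.mp htop
    have hfid : f = LinearMap.id := by
      ext x
      obtain ⟨y, hy⟩ := hfsurj x
      have := LinearMap.congr_fun hff y
      simp only [LinearMap.comp_apply] at this
      rw [LinearMap.id_apply, ← hy, this]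
    have hPid : P = LinearMap.id := by
      rw [hfP, hfid, TensorProduct.map_id]
    rw [Submodule.eq_top_iff']
    intro x
    have := hPmem x
    rwa [hPid, LinearMap.id_apply] at this
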